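/- For every δ > 0 there exist ρ > 0 and ε₀ > 0 such that for all ε ∈ (0, ε₀) and all x ∈ Ω_ε with |x − x₀| ≤ ρ, one has |u_ε(x) − u₀(x) − (log|x − x₀|/|log ε|)·u₀(x₀)| ≤ δ·(|log|x − x₀||/|log ε| + 1). In other words, near the hole u_ε(x) = u₀(x) + (log|x − x₀|/|log ε|)·(u₀(x₀) + o(1)) + o(1) as ε → 0⁺ and |x − x₀| → 0. -/

import Mathlib

open Real Set Metric Filter Topology

noncomputable section

abbrev E2 := EuclideanSpace ℝ (Fin 2)

/-- Second partial derivative `∂²u/∂xᵢ∂xⱼ` at `x`. -/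
noncomputable def pd2 (u : E2 → ℝ) (x : E2) (i j : Fin 2) : ℝ :=
  fderiv ℝ (fun y => fderiv ℝ u y (EuclideanSpace.single j 1)) x (EuclideanSpace.single i 1)

/-- The Hessian matrix `D²u(x)`. -/
noncomputable def Hess (u : E2 → ℝ) (x : E2) : Matrix (Fin 2) (Fin 2) ℝ :=
  Matrix.of fun i j => pd2 u x i j

/-- The Laplacian `Δu(x)`. -/
noncomputable def lap (u : E2 → ℝ) (x : E2) : ℝ := pd2 u x 0 0 + pd2 u x 1 1

/-- The largest eigenvalue of a symmetric 2×2 real matrix. -/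
noncomputable def lambdaMax (M : Matrix (Fin 2) (Fin 2) ℝ) : ℝ :=
  ((M 0 0 + M 1 1) + Real.sqrt ((M 0 0 - M 1 1) ^ 2 + (M 0 1 + M 1 0) ^ 2)) / 2

/-- `u` is the torsion function of `U`: continuous up to the boundary, `C²` inside,
`Δu = -1` in `U` and `u = 0` on `∂U`. -/
def IsTorsion (U : Set E2) (u : E2 → ℝ) : Prop :=
  ContinuousOn u (closure U) ∧ (∀ x ∈ U, ContDiffAt ℝ 2 u x) ∧
    (∀ x ∈ U, lap u x = -1) ∧ (∀ x ∈ frontier U, u x = 0)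


lemma pd2_eq_of (f : E2 → ℝ) (F : E2 → (E2 →L[ℝ] ℝ)) (x : E2)
    (hF : ∀ᶠ y in 𝓝 x, HasFDerivAt f (F y) y) (i j : Fin 2)
    (G : E2 →L[ℝ] ℝ)
    (hG : HasFDerivAt (fun y => F y (EuclideanSpace.single j 1)) G x) :
    pd2 f x i j = G (EuclideanSpace.single i 1) := by
  have h1 : (fun y => fderiv ℝ f y (EuclideanSpace.single j 1)) =ᶠ[𝓝 x]
      (fun y => F y (EuclideanSpace.single j 1)) := by
    filter_upwards [hF] with y hy
    rw [hy.fderiv]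
  rw [pd2, h1.fderiv_eq, hG.fderiv]

lemma diffAt_pd (f : E2 → ℝ) (x : E2) (hf : ContDiffAt ℝ 2 f x) (v : E2) :
    DifferentiableAt ℝ (fun y => fderiv ℝ f y v) x := by
  have h1 : ContDiffAt ℝ 1 (fderiv ℝ f) x := hf.fderiv_right (by norm_num)
  exact (h1.differentiableAt (by norm_num)).clm_apply (differentiableAt_const v)

lemma pd2_add (f g : E2 → ℝ) (x : E2) (hf : ContDiffAt ℝ 2 f x) (hg : ContDiffAt ℝ 2 g x)
    (i j : Fin 2) :
    pd2 (fun y => f y + g y) x i j = pd2 f x i j + pd2 g x i j := by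
  have hF : ∀ᶠ y in 𝓝 x, HasFDerivAt (fun y => f y + g y) (fderiv ℝ f y + fderiv ℝ g y) y := by
    filter_upwards [hf.eventually (by norm_num), hg.eventually (by norm_num)] with y hfy hgy
    exact (hfy.differentiableAt (by norm_num)).hasFDerivAt.add
      (hgy.differentiableAt (by norm_num)).hasFDerivAt
  have hGf := (diffAt_pd f x hf (EuclideanSpace.single j 1)).hasFDerivAt
  have hGg := (diffAt_pd g x hg (EuclideanSpace.single j 1)).hasFDerivAt
  have h := pd2_eq_of (fun y => f y + g y) _ x hF i j _
    (by exact hGf.add hGg)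
  simpa [pd2] using h

lemma pd2_smul (c : ℝ) (f : E2 → ℝ) (x : E2) (hf : ContDiffAt ℝ 2 f x) (i j : Fin 2) :
    pd2 (fun y => c * f y) x i j = c * pd2 f x i j := by
  have hF : ∀ᶠ y in 𝓝 x, HasFDerivAt (fun y => c * f y) (c • fderiv ℝ f y) y := by
    filter_upwards [hf.eventually (by norm_num)] with y hfy
    exact (hfy.differentiableAt (by norm_num)).hasFDerivAt.const_mul c
  have hGf := (diffAt_pd f x hf (EuclideanSpace.single j 1)).hasFDerivAt
  have h := pd2_eq_of (fun y => c * f y) _ x hF i j _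
    (by simpa [ContinuousLinearMap.smul_apply] using hGf.const_mul c)
  simpa [pd2] using h

lemma pd2_const (c : ℝ) (x : E2) (i j : Fin 2) : pd2 (fun _ => c) x i j = 0 := by
  have h := pd2_eq_of (fun _ => c) (fun _ => 0) x
    (Eventually.of_forall fun y => hasFDerivAt_const c y) i j 0
    (by simpa using hasFDerivAt_const (0:ℝ) x)
  simpa using h

lemma lap_add (f g : E2 → ℝ) (x : E2) (hf : ContDiffAt ℝ 2 f x) (hg : ContDiffAt ℝ 2 g x) :
    lap (fun y => f y + g y) x = lap f x + lap g x := by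
  simp only [lap, pd2_add f g x hf hg]; ring

lemma lap_smul (c : ℝ) (f : E2 → ℝ) (x : E2) (hf : ContDiffAt ℝ 2 f x) :
    lap (fun y => c * f y) x = c * lap f x := by
  simp only [lap, pd2_smul c f x hf]; ring

lemma lap_const (c : ℝ) (x : E2) : lap (fun _ => c) x = 0 := by
  simp [lap, pd2_const]

lemma hasFDerivAt_coord (c : E2) (i : Fin 2) (y : E2) :
    HasFDerivAt (fun y : E2 => y i - c i) (EuclideanSpace.proj (𝕜 := ℝ) i) y :=
  (EuclideanSpace.proj (𝕜 := ℝ) i).hasFDerivAt.sub_const (c i)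

lemma qform_eq (c : E2) (y : E2) :
    (y 0 - c 0) * (y 0 - c 0) + (y 1 - c 1) * (y 1 - c 1) = ‖y - c‖ ^ 2 := by
  rw [EuclideanSpace.norm_eq, Real.sq_sqrt (by positivity)]
  simp [Fin.sum_univ_two]; ring

lemma qform_pos (c : E2) {y : E2} (hy : y ≠ c) :
    0 < (y 0 - c 0) * (y 0 - c 0) + (y 1 - c 1) * (y 1 - c 1) := by
  rw [qform_eq]
  have : ‖y - c‖ ≠ 0 := by simp [sub_eq_zero, hy]
  positivity

/-- `log‖y-c‖ = log(q y)/2` globally. -/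
lemma log_norm_eq (c : E2) (y : E2) :
    Real.log ‖y - c‖
      = Real.log ((y 0 - c 0) * (y 0 - c 0) + (y 1 - c 1) * (y 1 - c 1)) / 2 := by
  rw [qform_eq, Real.log_pow]
  push_cast
  ring

/-- derivative data for `lg = log‖·-c‖`. -/
lemma hasFDerivAt_lg (c : E2) {y : E2} (hy : y ≠ c) :
    HasFDerivAt (fun y : E2 => Real.log ‖y - c‖)
      ((2:ℝ)⁻¹ • (((y 0 - c 0) * (y 0 - c 0) + (y 1 - c 1) * (y 1 - c 1))⁻¹ •
        (((y 0 - c 0) • (EuclideanSpace.proj (𝕜 := ℝ) 0) + (y 0 - c 0) • (EuclideanSpace.proj (𝕜 := ℝ) 0)) +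
         ((y 1 - c 1) • (EuclideanSpace.proj (𝕜 := ℝ) 1) + (y 1 - c 1) • (EuclideanSpace.proj (𝕜 := ℝ) 1))))) y := by
  have hq : HasFDerivAt (fun y : E2 => (y 0 - c 0) * (y 0 - c 0) + (y 1 - c 1) * (y 1 - c 1))
      (((y 0 - c 0) • (EuclideanSpace.proj (𝕜 := ℝ) 0) + (y 0 - c 0) • (EuclideanSpace.proj (𝕜 := ℝ) 0)) +
       ((y 1 - c 1) • (EuclideanSpace.proj (𝕜 := ℝ) 1) + (y 1 - c 1) • (EuclideanSpace.proj (𝕜 := ℝ) 1))) y :=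
    ((hasFDerivAt_coord c 0 y).mul (hasFDerivAt_coord c 0 y)).add
      ((hasFDerivAt_coord c 1 y).mul (hasFDerivAt_coord c 1 y))
  have hlog := (hq.log (ne_of_gt (qform_pos c hy)))
  have h2 := hlog.const_smul (2:ℝ)⁻¹
  have : (fun y : E2 => (2:ℝ)⁻¹ • Real.log ((y 0 - c 0) * (y 0 - c 0) + (y 1 - c 1) * (y 1 - c 1)))
      = fun y : E2 => Real.log ‖y - c‖ := by
    funext z; rw [log_norm_eq c z]; simp [smul_eq_mul]; ring
  rw [← this]
  exact h2

lemma contDiffAt_lg (c : E2) {x : E2} (hx : x ≠ c) :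
    ContDiffAt ℝ 2 (fun y : E2 => Real.log ‖y - c‖) x := by
  have h1 : ContDiffAt ℝ 2 (fun y : E2 => ‖y - c‖) x :=
    (contDiffAt_id.sub contDiffAt_const).norm ℝ (sub_ne_zero.2 hx)
  exact h1.log (by simp [sub_eq_zero, hx])

lemma pd2_lg (c : E2) {x : E2} (hx : x ≠ c) (i j : Fin 2) :
    pd2 (fun y : E2 => Real.log ‖y - c‖) x i j
      = ((if i = j then ((x 0 - c 0) * (x 0 - c 0) + (x 1 - c 1) * (x 1 - c 1)) else 0)
          - (x j - c j) * (2 * (x i - c i)))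
        / ((x 0 - c 0) * (x 0 - c 0) + (x 1 - c 1) * (x 1 - c 1)) ^ 2 := by
  classical
  set q : E2 → ℝ := fun y => (y 0 - c 0) * (y 0 - c 0) + (y 1 - c 1) * (y 1 - c 1) with hqdef
  set F : E2 → (E2 →L[ℝ] ℝ) := fun y =>
    (2:ℝ)⁻¹ • ((q y)⁻¹ •
      (((y 0 - c 0) • (EuclideanSpace.proj (𝕜 := ℝ) 0) + (y 0 - c 0) • (EuclideanSpace.proj (𝕜 := ℝ) 0)) +
       ((y 1 - c 1) • (EuclideanSpace.proj (𝕜 := ℝ) 1) + (y 1 - c 1) • (EuclideanSpace.proj (𝕜 := ℝ) 1)))) with hFdef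
  have hF : ∀ᶠ y in 𝓝 x, HasFDerivAt (fun y : E2 => Real.log ‖y - c‖) (F y) y := by
    have : {c}ᶜ ∈ 𝓝 x := (isOpen_compl_singleton).mem_nhds (by simpa using hx)
    filter_upwards [this] with y hy
    exact hasFDerivAt_lg c hy
  -- F y applied to single j 1 equals (y j - c j)/q y
  have happ : (fun y => F y (EuclideanSpace.single j 1)) = fun y => (y j - c j) * (q y)⁻¹ := by
    funext y
    have h0 : (EuclideanSpace.proj (𝕜 := ℝ) 0) (EuclideanSpace.single j 1)
        = if j = 0 then 1 else 0 := by
      simp [EuclideanSpace.single_apply]; exact if_congr eq_comm rfl rfl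
    have h1 : (EuclideanSpace.proj (𝕜 := ℝ) 1) (EuclideanSpace.single j 1)
        = if j = 1 then 1 else 0 := by
      simp [EuclideanSpace.single_apply]; exact if_congr eq_comm rfl rfl
    simp only [hFdef, ContinuousLinearMap.smul_apply, ContinuousLinearMap.add_apply, h0, h1,
      smul_eq_mul]
    fin_cases j <;> simp <;> ring
  -- derivative of y ↦ (y j - c j)/q y at x
  have hqx : q x ≠ 0 := ne_of_gt (qform_pos c hx)
  have hq : HasFDerivAt q
      (((x 0 - c 0) • (EuclideanSpace.proj (𝕜 := ℝ) 0) + (x 0 - c 0) • (EuclideanSpace.proj (𝕜 := ℝ) 0)) +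
       ((x 1 - c 1) • (EuclideanSpace.proj (𝕜 := ℝ) 1) + (x 1 - c 1) • (EuclideanSpace.proj (𝕜 := ℝ) 1))) x :=
    ((hasFDerivAt_coord c 0 x).mul (hasFDerivAt_coord c 0 x)).add
      ((hasFDerivAt_coord c 1 x).mul (hasFDerivAt_coord c 1 x))
  have hinv : HasFDerivAt (fun y : E2 => (q y)⁻¹) ((-(q x ^ 2)⁻¹) • (((x 0 - c 0) • (EuclideanSpace.proj (𝕜 := ℝ) 0) + (x 0 - c 0) • (EuclideanSpace.proj (𝕜 := ℝ) 0)) +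
       ((x 1 - c 1) • (EuclideanSpace.proj (𝕜 := ℝ) 1) + (x 1 - c 1) • (EuclideanSpace.proj (𝕜 := ℝ) 1)))) x :=
    (hasDerivAt_inv hqx).comp_hasFDerivAt x hq
  have hdiv := (hasFDerivAt_coord c j x).mul hinv
  have h := pd2_eq_of _ F x hF i j _ (by rw [happ]; exact hdiv)
  rw [h]
  have hi0 : (EuclideanSpace.proj (𝕜 := ℝ) 0) (EuclideanSpace.single i 1)
      = if i = 0 then 1 else 0 := by
    simp [EuclideanSpace.single_apply]; exact if_congr eq_comm rfl rfl
  have hi1 : (EuclideanSpace.proj (𝕜 := ℝ) 1) (EuclideanSpace.single i 1)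
      = if i = 1 then 1 else 0 := by
    simp [EuclideanSpace.single_apply]; exact if_congr eq_comm rfl rfl
  have hij : (EuclideanSpace.proj (𝕜 := ℝ) j) (EuclideanSpace.single i 1)
      = if i = j then 1 else 0 := by
    simp [EuclideanSpace.single_apply]; exact if_congr eq_comm rfl rfl
  simp only [ContinuousLinearMap.add_apply, ContinuousLinearMap.smul_apply, hi0, hi1, hij,
    smul_eq_mul]
  have hqx2 : q x ≠ 0 := hqx
  fin_cases i <;> fin_cases j <;> simp
  · rw [eq_div_iff (pow_ne_zero 2 hqx2)]; field_simp; ring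
  · rw [eq_div_iff (pow_ne_zero 2 hqx2)]; field_simp; ring
  · rw [eq_div_iff (pow_ne_zero 2 hqx2)]; field_simp; ring
  · rw [eq_div_iff (pow_ne_zero 2 hqx2)]; field_simp; ring

lemma lap_lg (c : E2) {x : E2} (hx : x ≠ c) :
    lap (fun y : E2 => Real.log ‖y - c‖) x = 0 := by
  have h0 := pd2_lg c hx 0 0
  have h1 := pd2_lg c hx 1 1
  have hqx : ((x 0 - c 0) * (x 0 - c 0) + (x 1 - c 1) * (x 1 - c 1)) ≠ 0 :=
    ne_of_gt (qform_pos c hx)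
  rw [lap, h0, h1]
  rw [← add_div, div_eq_zero_iff, if_pos rfl, if_pos rfl]; left
  ring

def qf (c : E2) : E2 → ℝ := fun y => (y 0 - c 0) * (y 0 - c 0) + (y 1 - c 1) * (y 1 - c 1)

lemma contDiff_qf (c : E2) : ContDiff ℝ 2 (qf c) := by
  have h0 : ContDiff ℝ 2 (fun y : E2 => y 0 - c 0) :=
    ((EuclideanSpace.proj (𝕜 := ℝ) (0 : Fin 2)).contDiff).sub contDiff_const
  have h1 : ContDiff ℝ 2 (fun y : E2 => y 1 - c 1) :=
    ((EuclideanSpace.proj (𝕜 := ℝ) (1 : Fin 2)).contDiff).sub contDiff_const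
  exact (h0.mul h0).add (h1.mul h1)

lemma lap_qf (c : E2) (x : E2) : lap (qf c) x = 4 := by
  classical
  set D : E2 → (E2 →L[ℝ] ℝ) := fun y =>
    ((y 0 - c 0) • (EuclideanSpace.proj (𝕜 := ℝ) 0) + (y 0 - c 0) • (EuclideanSpace.proj (𝕜 := ℝ) 0)) +
    ((y 1 - c 1) • (EuclideanSpace.proj (𝕜 := ℝ) 1) + (y 1 - c 1) • (EuclideanSpace.proj (𝕜 := ℝ) 1)) with hD
  have hF : ∀ᶠ y in 𝓝 x, HasFDerivAt (qf c) (D y) y :=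
    Eventually.of_forall fun y =>
      ((hasFDerivAt_coord c 0 y).mul (hasFDerivAt_coord c 0 y)).add
        ((hasFDerivAt_coord c 1 y).mul (hasFDerivAt_coord c 1 y))
  have key : ∀ j : Fin 2, pd2 (qf c) x j j = 2 := by
    intro j
    have happ : (fun y => D y (EuclideanSpace.single j 1)) = fun y : E2 => 2 * (y j - c j) := by
      funext y
      have h0 : (EuclideanSpace.proj (𝕜 := ℝ) 0) (EuclideanSpace.single j 1)
          = if j = 0 then 1 else 0 := by
        simp [EuclideanSpace.single_apply]; exact if_congr eq_comm rfl rfl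
      have h1 : (EuclideanSpace.proj (𝕜 := ℝ) 1) (EuclideanSpace.single j 1)
          = if j = 1 then 1 else 0 := by
        simp [EuclideanSpace.single_apply]; exact if_congr eq_comm rfl rfl
      simp only [hD, ContinuousLinearMap.add_apply, ContinuousLinearMap.smul_apply, h0, h1,
        smul_eq_mul]
      fin_cases j <;> simp <;> ring
    have hG : HasFDerivAt (fun y : E2 => 2 * (y j - c j))
        ((2:ℝ) • (EuclideanSpace.proj (𝕜 := ℝ) j)) x := (hasFDerivAt_coord c j x).const_mul 2
    have h := pd2_eq_of (qf c) _ x hF j j _ (by rw [happ]; exact hG)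
    rw [h]
    simp [EuclideanSpace.single_apply]
  rw [lap, key 0, key 1]; norm_num

/-- 1-D: no local max at 0 if second derivative positive. -/
lemma not_isLocalMax_of_pos {g ψ : ℝ → ℝ} {c : ℝ}
    (hg : ∀ᶠ t in 𝓝 (0:ℝ), HasDerivAt g (ψ t) t)
    (hψ : HasDerivAt ψ c 0) (hψ0 : ψ 0 = 0) (hc : 0 < c) :
    ¬ IsLocalMax g 0 := by
  intro hmax
  have hslope : Tendsto (fun t => ψ t / t) (𝓝[≠] (0:ℝ)) (𝓝 c) := by
    have h := hasDerivAt_iff_tendsto_slope.1 hψ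
    have : (slope ψ 0) = fun t => ψ t / t := by
      funext t; rw [slope_def_field, hψ0]; simp
    rwa [this] at h
  have hpos : ∀ᶠ t in 𝓝[>] (0:ℝ), 0 < ψ t := by
    have h1 : ∀ᶠ t in 𝓝[≠] (0:ℝ), c / 2 < ψ t / t :=
      hslope.eventually (eventually_gt_nhds (by linarith))
    have h2 : ∀ᶠ t in 𝓝[>] (0:ℝ), c / 2 < ψ t / t :=
      nhdsWithin_mono 0 (fun t (ht : t ∈ Ioi (0:ℝ)) => ne_of_gt ht) h1
    filter_upwards [h2, self_mem_nhdsWithin] with t h3 (h4 : (0:ℝ) < t)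
    have : 0 < ψ t / t := lt_trans (by linarith) h3
    exact (div_pos_iff.1 this).elim (fun h => h.1) (fun h => absurd h4 (by linarith [h.2]))
  obtain ⟨d1, hd1, hball1⟩ := Metric.eventually_nhds_iff.1 hg
  obtain ⟨d2, hd2, hball2⟩ := Metric.eventually_nhds_iff.1 (hmax : ∀ᶠ t in 𝓝 (0:ℝ), g t ≤ g 0)
  obtain ⟨d3, hd3, hball3⟩ := mem_nhdsWithin_iff.1 hpos
  set t₀ := min (min d1 d2) d3 / 2 with ht₀def
  have ht₀ : 0 < t₀ := by positivity
  have hmono : StrictMonoOn g (Icc 0 t₀) := by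
    apply strictMonoOn_of_deriv_pos (convex_Icc 0 t₀)
    · intro t ht
      have : dist t 0 < d1 := by
        rw [Real.dist_eq, sub_zero, abs_of_nonneg ht.1]
        have : t ≤ t₀ := ht.2
        have h5 : t₀ < min (min d1 d2) d3 := by rw [ht₀def]; linarith [lt_min (lt_min hd1 hd2) hd3]
        calc t ≤ t₀ := ht.2
        _ < min (min d1 d2) d3 := by
            rw [ht₀def]
            have : 0 < min (min d1 d2) d3 := lt_min (lt_min hd1 hd2) hd3
            linarith
        _ ≤ d1 := le_trans (min_le_left _ _) (min_le_left _ _)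
      exact ((hball1 this).continuousAt).continuousWithinAt
    · intro t ht
      rw [interior_Icc] at ht
      have hdist : dist t 0 < d1 := by
        rw [Real.dist_eq, sub_zero, abs_of_pos ht.1]
        calc t < t₀ := ht.2
        _ ≤ min (min d1 d2) d3 := by
            rw [ht₀def]
            have : 0 < min (min d1 d2) d3 := lt_min (lt_min hd1 hd2) hd3
            linarith
        _ ≤ d1 := le_trans (min_le_left _ _) (min_le_left _ _)
      have hdist3 : dist t 0 < d3 := by
        rw [Real.dist_eq, sub_zero, abs_of_pos ht.1]
        calc t < t₀ := ht.2
        _ ≤ min (min d1 d2) d3 := by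
            rw [ht₀def]
            have : 0 < min (min d1 d2) d3 := lt_min (lt_min hd1 hd2) hd3
            linarith
        _ ≤ d3 := min_le_right _ _
      rw [(hball1 hdist).deriv]
      exact hball3 ⟨by rwa [mem_ball], ht.1⟩
  have h6 : g 0 < g t₀ := hmono (left_mem_Icc.2 (le_of_lt ht₀)) (right_mem_Icc.2 (le_of_lt ht₀)) ht₀
  have h7 : g t₀ ≤ g 0 := by
    apply hball2
    rw [Real.dist_eq, sub_zero, abs_of_pos ht₀]
    have : 0 < min (min d1 d2) d3 := lt_min (lt_min hd1 hd2) hd3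
    calc t₀ < min (min d1 d2) d3 := by rw [ht₀def]; linarith
    _ ≤ d2 := le_trans (min_le_left _ _) (min_le_right _ _)
  linarith

lemma pd2_diag_nonpos {v : E2 → ℝ} {z : E2}
    (hv : ContDiffAt ℝ 2 v z) (hz : IsLocalMax v z) (i : Fin 2) :
    pd2 v z i i ≤ 0 := by
  by_contra hcon
  push_neg at hcon
  set e : E2 := EuclideanSpace.single i 1 with he
  set L : ℝ → E2 := fun t => z + t • e with hL
  have hLd : ∀ t : ℝ, HasDerivAt L e t := by
    intro t
    have h1 : HasDerivAt (fun t : ℝ => t • e) ((1:ℝ) • e) t := (hasDerivAt_id t).smul_const e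
    simpa only [one_smul] using h1.const_add z
  have hLc : Continuous L := by
    have : Continuous fun t : ℝ => t • e := continuous_id.smul continuous_const
    exact continuous_const.add this
  have hL0 : L 0 = z := by simp [hL]
  -- open set where v is C²
  obtain ⟨s, hs_nhds, hs⟩ := eventually_iff_exists_mem.1 (hv.eventually (by norm_num))
  set T : Set ℝ := L ⁻¹' (interior s) with hT
  have hT_nhds : T ∈ 𝓝 (0:ℝ) := by
    apply hLc.continuousAt.preimage_mem_nhds
    rw [hL0]
    exact isOpen_interior.mem_nhds (mem_interior_iff_mem_nhds.2 hs_nhds)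
  set g : ℝ → ℝ := fun t => v (L t) with hg
  set ψ : ℝ → ℝ := fun t => fderiv ℝ v (L t) e with hψdef
  have hgd : ∀ᶠ t in 𝓝 (0:ℝ), HasDerivAt g (ψ t) t := by
    filter_upwards [hT_nhds] with t ht
    have hdv : DifferentiableAt ℝ v (L t) :=
      (hs (L t) (interior_subset ht)).differentiableAt (by norm_num)
    exact hdv.hasFDerivAt.comp_hasDerivAt t (hLd t)
  -- ψ = φ ∘ L with φ y = fderiv v y e
  set φ : E2 → ℝ := fun y => fderiv ℝ v y e with hφdef
  have hφ : HasFDerivAt φ (fderiv ℝ φ z) z := (diffAt_pd v z hv e).hasFDerivAt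
  have hψd : HasDerivAt ψ (fderiv ℝ φ z e) 0 := by
    have h2 : HasFDerivAt φ (fderiv ℝ φ z) (L 0) := by rw [hL0]; exact hφ
    exact h2.comp_hasDerivAt 0 (hLd 0)
  have hgmax : IsLocalMax g 0 := by
    have h1 : Tendsto L (𝓝 0) (𝓝 z) := by rw [← hL0]; exact hLc.continuousAt
    have h2 := h1.eventually hz
    filter_upwards [h2] with t ht
    show g t ≤ g 0
    rw [hg]
    simpa [hL0] using ht
  have hψ0 : ψ 0 = 0 := by
    have h1 : HasDerivAt g (ψ 0) 0 := hgd.self_of_nhds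
    exact hgmax.hasDerivAt_eq_zero h1
  have hc : 0 < fderiv ℝ φ z e := hcon
  exact not_isLocalMax_of_pos hgd hψd hψ0 hc hgmax


lemma lap_nonpos_of_isLocalMax {v : E2 → ℝ} {z : E2}
    (hv : ContDiffAt ℝ 2 v z) (hz : IsLocalMax v z) : lap v z ≤ 0 := by
  have h0 := pd2_diag_nonpos hv hz 0
  have h1 := pd2_diag_nonpos hv hz 1
  rw [lap]; linarith

theorem maxPrinciple (U : Set E2) (hUo : IsOpen U) (hUb : Bornology.IsBounded U)
    (v : E2 → ℝ) (hc : ContinuousOn v (closure U))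
    (hd : ∀ x ∈ U, ContDiffAt ℝ 2 v x) (hsub : ∀ x ∈ U, 0 ≤ lap v x)
    (m : ℝ) (hbd : ∀ x ∈ frontier U, v x ≤ m) :
    ∀ x ∈ closure U, v x ≤ m := by
  intro x hx
  have hcl : IsCompact (closure U) := hUb.isCompact_closure
  have hne : (closure U).Nonempty := ⟨x, hx⟩
  set b : E2 → ℝ := qf 0 with hb
  have hbc : Continuous b := (contDiff_qf 0).continuous
  obtain ⟨w, hwcl, hwmax⟩ := hcl.exists_isMaxOn hne hbc.continuousOn
  set C := b w with hC
  have hbnonneg : ∀ y : E2, 0 ≤ b y := by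
    intro y
    rw [hb]
    show 0 ≤ (y 0 - (0:E2) 0) * (y 0 - (0:E2) 0) + (y 1 - (0:E2) 1) * (y 1 - (0:E2) 1)
    nlinarith [mul_self_nonneg (y 0 - (0:E2) 0), mul_self_nonneg (y 1 - (0:E2) 1)]
  have hC0 : 0 ≤ C := le_trans (hbnonneg w) le_rfl
  suffices h : ∀ η > 0, v x ≤ m + η * C by
    by_contra hcon
    push_neg at hcon
    set η := (v x - m) / (2 * (C + 1)) with hηdef
    have hvm : 0 < v x - m := by linarith
    have hη : 0 < η := by positivity
    have h1 := h η hη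
    have h2 : η * C ≤ (v x - m) / 2 := by
      rw [hηdef]
      rw [div_mul_eq_mul_div]
      rw [div_le_div_iff₀ (by positivity) (by norm_num)]
      nlinarith
    linarith
  intro η hη
  set vη : E2 → ℝ := fun y => v y + η * b y with hvη
  have hvηc : ContinuousOn vη (closure U) :=
    hc.add ((continuous_const.mul hbc).continuousOn)
  obtain ⟨z, hzcl, hzmax⟩ := hcl.exists_isMaxOn hne hvηc
  have hzU : z ∉ U := by
    intro hzU
    have hmax : IsLocalMax vη z := by
      have hU_nhds : U ∈ 𝓝 z := hUo.mem_nhds hzU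
      filter_upwards [hU_nhds] with y hy
      exact hzmax (subset_closure hy)
    have hgC : ContDiffAt ℝ 2 (fun y => η * b y) z :=
      contDiffAt_const.mul (contDiff_qf 0).contDiffAt
    have hCd : ContDiffAt ℝ 2 vη z := (hd z hzU).add hgC
    have hlap : lap vη z = lap v z + η * 4 := by
      rw [hvη, lap_add v (fun y => η * b y) z (hd z hzU) hgC,
          lap_smul η b z (contDiff_qf 0).contDiffAt, hb, lap_qf]
    have hle := lap_nonpos_of_isLocalMax hCd hmax
    have hge := hsub z hzU
    rw [hlap] at hle
    linarith
  have hzfr : z ∈ frontier U := by rw [hUo.frontier_eq]; exact ⟨hzcl, hzU⟩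
  have h1 : vη x ≤ vη z := hzmax hx
  have h2 : v z ≤ m := hbd z hzfr
  have h3 : b z ≤ C := hwmax hzcl
  have h4 : 0 ≤ b x := hbnonneg x
  have h5 : v x + η * b x ≤ v z + η * b z := h1
  nlinarith

lemma lap_sub (f g : E2 → ℝ) (x : E2) (hf : ContDiffAt ℝ 2 f x) (hg : ContDiffAt ℝ 2 g x) :
    lap (fun y => f y - g y) x = lap f x - lap g x := by
  have h1 : (fun y => f y - g y) = fun y => f y + (-1) * g y := by funext y; ring
  rw [h1, lap_add f _ x hf (contDiffAt_const.mul hg), lap_smul (-1) g x hg]; ring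

lemma lap_neg (f : E2 → ℝ) (x : E2) (hf : ContDiffAt ℝ 2 f x) :
    lap (fun y => -f y) x = -lap f x := by
  have h1 : (fun y => -f y) = fun y => (-1) * f y := by funext y; ring
  rw [h1, lap_smul (-1) f x hf]; ring

lemma continuousOn_lognorm (c : E2) (s : Set E2) (hs : ∀ y ∈ s, y ≠ c) :
    ContinuousOn (fun y : E2 => Real.log ‖y - c‖) s := by
  intro y hy
  have h1 : ContinuousAt (fun y : E2 => ‖y - c‖) y :=
    ((continuous_id.sub continuous_const).norm).continuousAt
  have h2 : ‖y - c‖ ≠ 0 := by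
    simp only [norm_ne_zero_iff, sub_ne_zero]
    exact hs y hy
  exact (h1.log h2).continuousWithinAt

set_option maxHeartbeats 4000000 in
/-- Near the hole, `u_ε(x) = u₀(x) + (log|x-x₀|/|log ε|)(u₀(x₀) + o(1)) + o(1)`. -/
theorem uEps_expansion_near_hole
    (Ω : Set E2) (hΩo : IsOpen Ω) (hΩb : Bornology.IsBounded Ω) (hΩc : Convex ℝ Ω)
    (u₀ : E2 → ℝ) (h₀ : IsTorsion Ω u₀)
    (x₀ : E2) (hx₀ : x₀ ∈ Ω)
    (ε₁ : ℝ) (hε₁ : 0 < ε₁) (hball : closedBall x₀ ε₁ ⊆ Ω)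
    (uε : ℝ → E2 → ℝ)
    (huε : ∀ ε ∈ Ioo (0:ℝ) ε₁, IsTorsion (Ω \ closedBall x₀ ε) (uε ε)) :
    ∀ δ > 0, ∃ ρ > 0, ∃ ε₀ > 0, ε₀ ≤ ε₁ ∧ ∀ ε ∈ Ioo (0:ℝ) ε₀,
      ∀ x ∈ Ω \ closedBall x₀ ε, ‖x - x₀‖ ≤ ρ →
        |uε ε x - u₀ x - (Real.log ‖x - x₀‖ / |Real.log ε|) * u₀ x₀|
          ≤ δ * (|Real.log ‖x - x₀‖| / |Real.log ε| + 1) := by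
  obtain ⟨hWc, hWd, hWlap, hWfr⟩ := h₀
  intro δ hδ
  -- u₀ is nonnegative on closure Ω
  have hu₀_nonneg : ∀ y ∈ closure Ω, 0 ≤ u₀ y := by
    intro y hy
    have h := maxPrinciple Ω hΩo hΩb (fun z => -u₀ z) hWc.neg
      (fun z hz => (hWd z hz).neg)
      (fun z hz => by rw [lap_neg u₀ z (hWd z hz), hWlap z hz]; norm_num)
      0 (fun z hz => by show -u₀ z ≤ 0; rw [hWfr z hz]; norm_num) y hy
    have h' : -u₀ y ≤ 0 := h
    linarith
  -- upper bound M for u₀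
  have hcomp : IsCompact (closure Ω) := hΩb.isCompact_closure
  obtain ⟨zM, hzM, hzMmax⟩ := hcomp.exists_isMaxOn ⟨x₀, subset_closure hx₀⟩ hWc
  set M : ℝ := max (u₀ zM) 1 with hMdef
  have hM1 : (1:ℝ) ≤ M := le_max_right _ _
  have hM0 : (0:ℝ) < M := lt_of_lt_of_le one_pos hM1
  have hMbd : ∀ y ∈ closure Ω, u₀ y ≤ M := fun y hy => le_trans (hzMmax hy) (le_max_left _ _)
  -- outer radius R
  obtain ⟨R₀, hR₀⟩ := hΩb.subset_closedBall x₀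
  set R : ℝ := max R₀ (max 1 ε₁) with hRdef
  have hR1 : (1:ℝ) ≤ R := le_trans (le_max_left 1 ε₁) (le_max_right _ _)
  have hΩR : closure Ω ⊆ closedBall x₀ R :=
    closure_minimal (hR₀.trans (closedBall_subset_closedBall (le_max_left _ _))) isClosed_closedBall
  have hlogR : 0 ≤ Real.log R := Real.log_nonneg hR1
  -- modulus of continuity of u₀ at x₀
  have hcont : ContinuousAt u₀ x₀ :=
    hWc.continuousAt (mem_of_superset (hΩo.mem_nhds hx₀) subset_closure)
  obtain ⟨ρ₁, hρ₁, hmod⟩ := Metric.continuousAt_iff.1 hcont (δ/2) (by positivity)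
  -- choice of σ
  set σ : ℝ := min (min ε₁ (ρ₁/2)) (1/2) with hσdef
  have hσpos : 0 < σ := lt_min (lt_min hε₁ (by positivity)) (by norm_num)
  have hσε₁ : σ ≤ ε₁ := le_trans (min_le_left _ _) (min_le_left _ _)
  have hσρ₁ : σ < ρ₁ := lt_of_le_of_lt (le_trans (min_le_left _ _) (min_le_right _ _))
    (by linarith)
  have hσ1 : σ < 1 := lt_of_le_of_lt (min_le_right _ _) (by norm_num)
  have hlogσ : Real.log σ < 0 := Real.log_neg hσpos hσ1
  -- choice of K and ε₀
  set K : ℝ := 4*M*(Real.log R - Real.log σ)/δ + 4*M*|Real.log σ|/δ with hKdef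
  have hKa : 0 ≤ 4*M*(Real.log R - Real.log σ)/δ := by
    apply div_nonneg _ hδ.le
    nlinarith
  have hKb : 0 ≤ 4*M*|Real.log σ|/δ := by positivity
  have hK0 : 0 ≤ K := by rw [hKdef]; linarith
  refine ⟨σ/2, by positivity, min (σ/2) (Real.exp (-(K+1))), ?_, ?_, ?_⟩
  · exact lt_min (by positivity) (Real.exp_pos _)
  · calc min (σ/2) (Real.exp (-(K+1))) ≤ σ/2 := min_le_left _ _
    _ ≤ ε₁ := by linarith
  intro ε hε x hx hxρ
  obtain ⟨hε0, hεlt⟩ := hε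
  have hεσ2 : ε < σ/2 := lt_of_lt_of_le hεlt (min_le_left _ _)
  have hεσ : ε < σ := by linarith
  have hεε₁ : ε < ε₁ := lt_of_lt_of_le hεσ hσε₁
  have hlogε : Real.log ε < -(K+1) := by
    have h1 : ε < Real.exp (-(K+1)) := lt_of_lt_of_le hεlt (min_le_right _ _)
    have h2 := Real.log_lt_log hε0 h1
    rwa [Real.log_exp] at h2
  have haℓ : 0 < -Real.log ε := by linarith
  have habs : |Real.log ε| = -Real.log ε := abs_of_neg (by linarith)
  -- torsion function on the perforated domain
  obtain ⟨hEc, hEd, hElap, hEfr⟩ := huε ε ⟨hε0, hεε₁⟩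
  set U : Set E2 := Ω \ closedBall x₀ ε with hUdef
  have hUo : IsOpen U := hΩo.sdiff isClosed_closedBall
  have hUb : Bornology.IsBounded U := hΩb.subset diff_subset
  have hclU_Ω : closure U ⊆ closure Ω := closure_mono diff_subset
  have hclU_ball : ∀ y ∈ closure U, ε ≤ ‖y - x₀‖ := by
    intro y hy
    have h1 : U ⊆ (ball x₀ ε)ᶜ := by
      intro u hu hb
      exact hu.2 (ball_subset_closedBall hb)
    have h2 := closure_minimal h1 isOpen_ball.isClosed_compl hy
    rw [mem_compl_iff, mem_ball, not_lt, dist_eq_norm] at h2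
    exact h2
  have hclU_ne : ∀ y ∈ closure U, y ≠ x₀ := by
    intro y hy hc
    have := hclU_ball y hy
    rw [hc] at this
    simp at this
    linarith
  -- frontier of U
  have hfrU : ∀ y ∈ frontier U, y ∈ closure Ω ∧ ε ≤ ‖y - x₀‖ ∧ (u₀ y = 0 ∨ ‖y - x₀‖ = ε) := by
    intro y hy
    rw [hUo.frontier_eq] at hy
    obtain ⟨hy1, hy2⟩ := hy
    refine ⟨hclU_Ω hy1, hclU_ball y hy1, ?_⟩
    by_cases hyΩ : y ∈ Ω
    · right
      have h3 : y ∈ closedBall x₀ ε := by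
        by_contra hc
        exact hy2 ⟨hyΩ, hc⟩
      rw [mem_closedBall, dist_eq_norm] at h3
      exact le_antisymm h3 (hclU_ball y hy1)
    · left
      exact hWfr y (by rw [hΩo.frontier_eq]; exact ⟨hclU_Ω hy1, hyΩ⟩)
  have hfrU_cl : frontier U ⊆ closure U := frontier_subset_closure
  -- uε ≤ u₀ on closure U
  have hle : ∀ y ∈ closure U, uε ε y ≤ u₀ y := by
    intro y hy
    have h := maxPrinciple U hUo hUb (fun z => uε ε z - u₀ z)
      (hEc.sub (hWc.mono hclU_Ω))
      (fun z hz => (hEd z hz).sub (hWd z hz.1))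
      (fun z hz => by
        rw [lap_sub (uε ε) u₀ z (hEd z hz) (hWd z hz.1), hElap z hz, hWlap z hz.1]; norm_num)
      0 (fun z hz => by
        show uε ε z - u₀ z ≤ 0
        have h1 := hEfr z hz
        have h2 := hu₀_nonneg z (hfrU z hz).1
        rw [h1]; linarith)
      y hy
    have h' : uε ε y - u₀ y ≤ 0 := h
    linarith
  -- the logarithmic barrier
  have hDr : 0 < Real.log R - Real.log ε := by linarith
  set c₁ : ℝ := M / (Real.log R - Real.log ε) with hc₁def
  have hc₁ : 0 < c₁ := div_pos hM0 hDr
  have hbar : ∀ y ∈ closure U, u₀ y - uε ε y ≤ c₁ * (Real.log R - Real.log ‖y - x₀‖) := by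
    intro y hy
    have hlapbar : ∀ z ∈ U, lap (fun w => c₁ * (Real.log R - Real.log ‖w - x₀‖)) z = 0 := by
      intro z hz
      have hzne : z ≠ x₀ := hclU_ne z (subset_closure hz)
      rw [lap_smul c₁ _ z (contDiffAt_const.sub (contDiffAt_lg x₀ hzne)),
        lap_sub (fun _ => Real.log R) _ z contDiffAt_const (contDiffAt_lg x₀ hzne),
        lap_const, lap_lg x₀ hzne]
      ring
    have h := maxPrinciple U hUo hUb
      (fun z => (u₀ z - uε ε z) - c₁ * (Real.log R - Real.log ‖z - x₀‖))
      (((hWc.mono hclU_Ω).sub hEc).sub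
        (continuousOn_const.mul
          (continuousOn_const.sub (continuousOn_lognorm x₀ (closure U) hclU_ne))))
      (fun z hz => ((hWd z hz.1).sub (hEd z hz)).sub
        (contDiffAt_const.mul (contDiffAt_const.sub
          (contDiffAt_lg x₀ (hclU_ne z (subset_closure hz))))))
      (fun z hz => by
        rw [lap_sub (fun w => u₀ w - uε ε w) (fun w => c₁ * (Real.log R - Real.log ‖w - x₀‖)) z
            ((hWd z hz.1).sub (hEd z hz))
            (contDiffAt_const.mul (contDiffAt_const.sub
              (contDiffAt_lg x₀ (hclU_ne z (subset_closure hz))))),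
          lap_sub u₀ (uε ε) z (hWd z hz.1) (hEd z hz), hWlap z hz.1, hElap z hz,
          hlapbar z hz]
        norm_num)
      0 (fun z hz => by
        show (u₀ z - uε ε z) - c₁ * (Real.log R - Real.log ‖z - x₀‖) ≤ 0
        obtain ⟨hzΩ, hzε, hzcase⟩ := hfrU z hz
        have hzE := hEfr z hz
        have hznorm : (0:ℝ) < ‖z - x₀‖ := lt_of_lt_of_le hε0 hzε
        rcases hzcase with h0 | hsph
        · have hlogle : Real.log ‖z - x₀‖ ≤ Real.log R := by
            apply Real.log_le_log hznorm
            have := hΩR hzΩ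
            rw [mem_closedBall, dist_eq_norm] at this
            exact this
          rw [h0, hzE]
          nlinarith
        · rw [hzE, hsph]
          have hmul : c₁ * (Real.log R - Real.log ε) = M := by
            rw [hc₁def]
            field_simp
          rw [hmul]
          have := hMbd z hzΩ
          linarith)
      y hy
    have h' : (u₀ y - uε ε y) - c₁ * (Real.log R - Real.log ‖y - x₀‖) ≤ 0 := h
    linarith
  -- quantitative smallness
  have hbineq : M * (Real.log R - Real.log σ) ≤ δ/4 * (-Real.log ε) := by
    have h2 : 4*M*(Real.log R - Real.log σ)/δ ≤ K := by
      rw [hKdef]; linarith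
    have e1 : 4*M*(Real.log R - Real.log σ) = (4*M*(Real.log R - Real.log σ)/δ) * δ :=
      (div_mul_cancel₀ _ (ne_of_gt hδ)).symm
    have h4 : 4*M*(Real.log R - Real.log σ) ≤ K * δ := by
      rw [e1]; exact mul_le_mul_of_nonneg_right h2 hδ.le
    have h5 : K * δ ≤ (-Real.log ε) * δ := mul_le_mul_of_nonneg_right (by linarith) hδ.le
    nlinarith
  have hcineq : M * |Real.log σ| ≤ δ/4 * (-Real.log ε) := by
    have h2 : 4*M*|Real.log σ|/δ ≤ K := by
      rw [hKdef]; linarith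
    have e1 : 4*M*|Real.log σ| = (4*M*|Real.log σ|/δ) * δ :=
      (div_mul_cancel₀ _ (ne_of_gt hδ)).symm
    have h4 : 4*M*|Real.log σ| ≤ K * δ := by
      rw [e1]; exact mul_le_mul_of_nonneg_right h2 hδ.le
    have h5 : K * δ ≤ (-Real.log ε) * δ := mul_le_mul_of_nonneg_right (by linarith) hδ.le
    nlinarith
  have habsσ : |Real.log σ| = -Real.log σ := abs_of_neg hlogσ
  -- annulus
  set A : Set E2 := ball x₀ σ \ closedBall x₀ ε with hAdef
  have hAo : IsOpen A := isOpen_ball.sdiff isClosed_closedBall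
  have hAb : Bornology.IsBounded A := (isBounded_ball).subset diff_subset
  have hAU : A ⊆ U := by
    intro y hy
    refine ⟨hball ?_, hy.2⟩
    have := hy.1
    rw [mem_ball] at this
    exact mem_closedBall.2 (le_trans this.le hσε₁)
  have hclA : closure A ⊆ closure U := closure_mono hAU
  have hclA_ne : ∀ y ∈ closure A, y ≠ x₀ := fun y hy => hclU_ne y (hclA hy)
  -- the comparison function w
  set w : E2 → ℝ := fun z => uε ε z - u₀ z - (Real.log ‖z - x₀‖ / |Real.log ε|) * u₀ x₀
    with hwdef
  have hu₀x₀M : u₀ x₀ ≤ M := hMbd x₀ (subset_closure hx₀)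
  have hu₀x₀0 : 0 ≤ u₀ x₀ := hu₀_nonneg x₀ (subset_closure hx₀)
  -- continuity of w on closure A
  have hwc : ContinuousOn w (closure A) := by
    apply ContinuousOn.sub
    · exact (hEc.mono hclA).sub (hWc.mono (hclA.trans hclU_Ω))
    · exact ((continuousOn_lognorm x₀ (closure A) hclA_ne).div_const _).mul continuousOn_const
  -- smoothness and harmonicity of w on A
  have hwd : ∀ z ∈ A, ContDiffAt ℝ 2 w z := by
    intro z hz
    have hzU := hAU hz
    have hzne : z ≠ x₀ := hclA_ne z (subset_closure hz)
    apply ContDiffAt.sub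
    · exact (hEd z hzU).sub (hWd z hzU.1)
    · exact ((contDiffAt_lg x₀ hzne).div_const _).mul contDiffAt_const
  have hwlap : ∀ z ∈ A, lap w z = 0 := by
    intro z hz
    have hzU := hAU hz
    have hzne : z ≠ x₀ := hclA_ne z (subset_closure hz)
    have hshape : w = fun z =>
        (fun y => uε ε y - u₀ y) z -
        (fun y => (u₀ x₀ / |Real.log ε|) * Real.log ‖y - x₀‖) z := by
      funext y; simp only [hwdef]; ring
    rw [hshape,
      lap_sub _ _ z ((hEd z hzU).sub (hWd z hzU.1))
        (contDiffAt_const.mul (contDiffAt_lg x₀ hzne)),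
      lap_sub (uε ε) u₀ z (hEd z hzU) (hWd z hzU.1), hElap z hzU, hWlap z hzU.1,
      lap_smul _ _ z (contDiffAt_lg x₀ hzne), lap_lg x₀ hzne]
    ring
  -- boundary bounds for w
  have hwbd : ∀ y ∈ frontier A, w y ≤ δ ∧ -w y ≤ δ := by
    intro y hy
    have hfrA : y ∈ sphere x₀ σ ∪ sphere x₀ ε := by
      have h1 : A = ball x₀ σ ∩ (closedBall x₀ ε)ᶜ := by rw [hAdef, diff_eq]
      rw [h1] at hy
      rcases frontier_inter_subset _ _ hy with h | h
      · exact Or.inl (by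
          have := h.1
          rwa [frontier_ball x₀ (ne_of_gt hσpos)] at this)
      · refine Or.inr ?_
        have h2 := h.2
        rwa [frontier_compl, frontier_closedBall x₀ (ne_of_gt hε0)] at h2
    rcases hfrA with hsphσ | hsphε
    · -- outer sphere
      rw [mem_sphere] at hsphσ
      have hynorm : ‖y - x₀‖ = σ := by rw [← dist_eq_norm]; exact hsphσ
      have hyΩ : y ∈ Ω := hball (mem_closedBall.2 (by rw [hsphσ]; exact hσε₁))
      have hyU : y ∈ U := ⟨hyΩ, by
        rw [mem_closedBall, not_le, hsphσ]
        exact hεσ⟩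
      have hyclU : y ∈ closure U := subset_closure hyU
      have h6 : uε ε y ≤ u₀ y := hle y hyclU
      have h7 : u₀ y - uε ε y ≤ c₁ * (Real.log R - Real.log σ) := by
        have := hbar y hyclU
        rwa [hynorm] at this
      have h8 : c₁ * (Real.log R - Real.log σ) ≤ δ/4 := by
        have e2 : c₁ * (Real.log R - Real.log σ)
            = M * (Real.log R - Real.log σ) / (Real.log R - Real.log ε) := by
          rw [hc₁def]; ring
        rw [e2]
        have hnum : 0 ≤ M * (Real.log R - Real.log σ) := by nlinarith
        have hd1 : M * (Real.log R - Real.log σ) / (Real.log R - Real.log ε)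
            ≤ M * (Real.log R - Real.log σ) / (-Real.log ε) :=
          div_le_div_of_nonneg_left hnum haℓ (by linarith)
        have hd2 : M * (Real.log R - Real.log σ) / (-Real.log ε) ≤ δ/4 := by
          rw [div_le_iff₀ haℓ]
          linarith [hbineq]
        linarith
      have h9 : |(Real.log σ / |Real.log ε|) * u₀ x₀| ≤ δ/4 := by
        rw [habs, abs_mul, abs_div, habsσ]
        rw [abs_of_pos haℓ, abs_of_nonneg hu₀x₀0]
        rw [div_mul_eq_mul_div, div_le_iff₀ haℓ]
        have : -Real.log σ * u₀ x₀ ≤ M * |Real.log σ| := by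
          rw [habsσ]; nlinarith
        linarith [hcineq]
      have hwy : w y = (uε ε y - u₀ y) - (Real.log σ / |Real.log ε|) * u₀ x₀ := by
        simp only [hwdef]
        rw [hynorm]
      constructor
      · rw [hwy]
        have := abs_le.1 h9
        linarith [this.1, this.2]
      · rw [hwy]
        have := abs_le.1 h9
        linarith [this.1, this.2]
    · -- inner sphere
      rw [mem_sphere] at hsphε
      have hynorm : ‖y - x₀‖ = ε := by rw [← dist_eq_norm]; exact hsphε
      have hyΩ : y ∈ Ω := hball (mem_closedBall.2 (by rw [hsphε]; linarith))
      have hyfrU : y ∈ frontier U := by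
        rw [hUo.frontier_eq]
        constructor
        · have h1 : y ∈ closure ((closedBall x₀ ε)ᶜ) := by
            rw [closure_compl, interior_closedBall x₀ (ne_of_gt hε0)]
            rw [mem_compl_iff, mem_ball, hsphε]
            exact lt_irrefl ε
          have h2 : y ∈ Ω ∩ closure ((closedBall x₀ ε)ᶜ) := ⟨hyΩ, h1⟩
          have h3 := hΩo.inter_closure h2
          rwa [← diff_eq] at h3
        · intro hyU
          exact hyU.2 (mem_closedBall.2 (le_of_eq hsphε))
      have hyE : uε ε y = 0 := hEfr y hyfrU
      have hyclose : |u₀ y - u₀ x₀| ≤ δ/2 := by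
        have h1 : dist y x₀ < ρ₁ := by rw [hsphε]; linarith
        have h2 := hmod h1
        rw [Real.dist_eq] at h2
        linarith [le_of_lt h2]
      have hlogdiv : Real.log ε / |Real.log ε| = -1 := by
        rw [habs, div_neg, div_self (by linarith : Real.log ε ≠ 0)]
      have hwy : w y = u₀ x₀ - u₀ y := by
        simp only [hwdef]
        rw [hynorm, hyE, hlogdiv]
        ring
      have := abs_le.1 hyclose
      constructor
      · rw [hwy]; linarith [this.1, this.2]
      · rw [hwy]; linarith [this.1, this.2]
  -- apply the maximum principle on A to w and -w
  have hwub : ∀ y ∈ closure A, w y ≤ δ :=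
    maxPrinciple A hAo hAb w hwc hwd (fun z hz => le_of_eq (hwlap z hz).symm) δ
      (fun z hz => (hwbd z hz).1)
  have hwlb : ∀ y ∈ closure A, -w y ≤ δ := by
    apply maxPrinciple A hAo hAb (fun z => -w z) hwc.neg (fun z hz => (hwd z hz).neg)
      (fun z hz => by rw [lap_neg w z (hwd z hz), hwlap z hz]; norm_num) δ
      (fun z hz => by show -w z ≤ δ; exact (hwbd z hz).2)
  -- conclude at the point x
  have hxA : x ∈ A := by
    constructor
    · rw [mem_ball, dist_eq_norm]
      linarith
    · exact hx.2
  have h1 := hwub x (subset_closure hxA)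
  have h2 : -w x ≤ δ := hwlb x (subset_closure hxA)
  have h3 : |w x| ≤ δ := abs_le.2 ⟨by linarith, h1⟩
  have h4 : (0:ℝ) ≤ |Real.log ‖x - x₀‖| / |Real.log ε| := by positivity
  calc |uε ε x - u₀ x - (Real.log ‖x - x₀‖ / |Real.log ε|) * u₀ x₀| = |w x| := by simp only [hwdef]
  _ ≤ δ := h3
  _ ≤ δ * (|Real.log ‖x - x₀‖| / |Real.log ε| + 1) := by nlinarith
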